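/- For every integer r ≥ 2 and every real b ≥ (r-1)·log(4er), there exists a probability mass function (p_k)_{k≥r} on the integers k ≥ r with finite mean ∑_{k≥r} k·p_k = b such that p_c := 1 - 1/(max_{x∈[0,1]} G^r(x)) satisfies p_c ≤ 2er(r-1)·e^{-b/(r-1)}, where G^r(x) = ∑_{k≥r} p_k · g_k^r(x). -/

import Mathlib

/-- The polynomial `g_k^r(x) = ∑_{i=0}^{r-1} C(k,i) x^(k-i-1) (1-x)^i`. -/
noncomputable def g (r k : ℕ) (x : ℝ) : ℝ :=
  ∑ i ∈ Finset.range r, (k.choose i : ℝ) * x ^ (k - i - 1) * (1 - x) ^ i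

namespace BP



lemma telescope (a : ℕ) (ha : 2 ≤ a) :
    ∀ S, a ≤ S → ∑ j ∈ Finset.Icc a S, (1:ℝ)/(j*((j:ℝ)-1)) = 1/((a:ℝ)-1) - 1/S := by
  refine Nat.le_induction ?_ ?_
  · have h0 : ((a:ℝ)) ≠ 0 := by positivity
    have h1 : ((a:ℝ)-1) ≠ 0 := by
      have : (2:ℝ) ≤ a := by exact_mod_cast ha
      nlinarith
    rw [Finset.Icc_self, Finset.sum_singleton]
    field_simp
    ring
  · intro S hS ih
    rw [Finset.sum_Icc_succ_top (by omega), ih]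
    have hS0 : ((S:ℝ)) ≠ 0 := by
      have : (2:ℝ) ≤ S := by exact_mod_cast le_trans ha hS
      nlinarith
    have hS1 : ((S:ℝ)+1) ≠ 0 := by positivity
    have hc : ((S+1:ℕ):ℝ) = (S:ℝ)+1 := by push_cast; ring
    rw [hc]
    have hc2 : (S:ℝ)+1-1 = (S:ℝ) := by ring
    rw [hc2]
    field_simp
    ring

lemma harmonic_shift (r : ℕ) (hr : 2 ≤ r) :
    ∀ S, r ≤ S → ∑ k ∈ Finset.Icc r S, (1:ℝ)/((k:ℝ)-1)
      ≤ 1/((r:ℝ)-1) + (Real.log ((S:ℝ)-1) - Real.log ((r:ℝ)-1)) := by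
  refine Nat.le_induction ?_ ?_
  · rw [Finset.Icc_self, Finset.sum_singleton]; simp
  · intro S hS ih
    rw [Finset.sum_Icc_succ_top (by omega)]
    have hS2 : (2:ℝ) ≤ (S:ℝ) := by exact_mod_cast le_trans hr hS
    have h1 : (0:ℝ) < (S:ℝ) - 1 := by linarith
    have h0 : (0:ℝ) < (S:ℝ) := by linarith
    have hc : ((S+1:ℕ):ℝ) = (S:ℝ)+1 := by push_cast; ring
    rw [hc]
    have hc2 : (S:ℝ)+1-1 = (S:ℝ) := by ring
    rw [hc2]
    have hstep : 1/(S:ℝ) ≤ Real.log (S:ℝ) - Real.log ((S:ℝ)-1) := by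
      have hlog := Real.log_le_sub_one_of_pos (x := ((S:ℝ)-1)/(S:ℝ)) (by positivity)
      rw [Real.log_div (by linarith) (by linarith)] at hlog
      have : ((S:ℝ)-1)/(S:ℝ) - 1 = -(1/(S:ℝ)) := by field_simp; ring
      rw [this] at hlog
      linarith
    linarith

/-- t - t^r ≤ (r-1)(1-t) for t ∈ [0,1] -/
lemma pow_gap (t : ℝ) (ht0 : 0 ≤ t) (ht1 : t ≤ 1) :
    ∀ r : ℕ, 1 ≤ r → t - t^r ≤ ((r:ℝ)-1)*(1-t) := by
  refine Nat.le_induction ?_ ?_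
  · simp
  · intro r hr ih
    have htr : t^r ≤ 1 := pow_le_one₀ ht0 ht1
    have : t - t^(r+1) = (t - t^r) + t^r*(1-t) := by ring
    rw [this]
    push_cast
    nlinarith

/-- C(n,m) ≤ C(n+s, m+s) -/
lemma choose_two_down (j k : ℕ) (h2 : 2 ≤ j) (hjk : j ≤ k) :
    k * (k-1) * ((k-2).choose (j-2)) = j * (j-1) * (k.choose j) := by
  obtain ⟨j', rfl⟩ : ∃ j', j = j' + 2 := ⟨j - 2, by omega⟩
  obtain ⟨k', rfl⟩ : ∃ k', k = k' + 2 := ⟨k - 2, by omega⟩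
  have h1 := Nat.add_one_mul_choose_eq (k'+1) (j'+1)
  have h0 := Nat.add_one_mul_choose_eq k' j'
  -- h1 : (k'+2) * (k'+1).choose (j'+1) = (k'+2).choose (j'+2) * (j'+2)
  -- h0 : (k'+1) * k'.choose j' = (k'+1).choose (j'+1) * (j'+1)
  have hs : (k'+2) - 1 = k' + 1 := by omega
  have hs2 : (k'+2) - 2 = k' := by omega
  have hs3 : (j'+2) - 1 = j' + 1 := by omega
  have hs4 : (j'+2) - 2 = j' := by omega
  rw [hs, hs2, hs3, hs4]
  calc (k'+2) * (k'+1) * k'.choose j' = (k'+2) * ((k'+1) * k'.choose j') := by ring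
  _ = (k'+2) * ((k'+1).choose (j'+1) * (j'+1)) := by rw [h0]
  _ = (j'+1) * ((k'+2) * (k'+1).choose (j'+1)) := by ring
  _ = (j'+1) * ((k'+2).choose (j'+2) * (j'+2)) := by rw [h1]
  _ = (j'+2) * (j'+1) * (k'+2).choose (j'+2) := by ring

/-- S * C(S-1, i) = (i+1) * C(S, i+1) -/
lemma choose_one_down (S i : ℕ) (hS : 1 ≤ S) :
    S * ((S-1).choose i) = (i+1) * (S.choose (i+1)) := by
  obtain ⟨S', rfl⟩ : ∃ S', S = S' + 1 := ⟨S - 1, by omega⟩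
  have h := Nat.add_one_mul_choose_eq S' i
  simpa [Nat.add_sub_cancel, mul_comm] using h



/-- upper tail of the binomial expansion -/
noncomputable def Qb (r k : ℕ) (x : ℝ) : ℝ :=
  ∑ j ∈ Finset.Icc r k, (k.choose j : ℝ) * x ^ (k - j) * (1 - x) ^ j

lemma sum_unit (k : ℕ) (x : ℝ) :
    ∑ i ∈ Finset.range (k+1), (k.choose i : ℝ) * x ^ (k - i) * (1 - x) ^ i = 1 := by
  have h : (1:ℝ) = ∑ m ∈ Finset.range (k+1), (1-x)^m * x^(k-m) * (k.choose m : ℝ) := by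
    rw [← add_pow]
    norm_num
  have h3 : ∑ i ∈ Finset.range (k+1), (k.choose i : ℝ) * x ^ (k - i) * (1 - x) ^ i
      = ∑ m ∈ Finset.range (k+1), (1-x)^m * x^(k-m) * (k.choose m : ℝ) :=
    Finset.sum_congr rfl (fun i _ => by ring)
  rw [h3, ← h]

lemma xg_eq (r k : ℕ) (hr : 1 ≤ r) (hrk : r ≤ k) (x : ℝ) :
    x * g r k x = 1 - Qb r k x := by
  have key : x * g r k x = ∑ i ∈ Finset.range r, (k.choose i : ℝ) * x ^ (k - i) * (1 - x) ^ i := by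
    rw [g, Finset.mul_sum]
    refine Finset.sum_congr rfl (fun i hi => ?_)
    have hik : i < k := by
      have := Finset.mem_range.mp hi; omega
    have : x ^ (k - i) = x * x ^ (k - i - 1) := by
      rw [← pow_succ']
      congr 1
      omega
    rw [this]; ring
  have split : (∑ i ∈ Finset.range r, (k.choose i : ℝ) * x ^ (k - i) * (1 - x) ^ i)
      + Qb r k x = 1 := by
    rw [Qb, ← Finset.Ico_add_one_right_eq_Icc]
    have hsplit := Finset.sum_range_add_sum_Ico
      (fun j => (k.choose j : ℝ) * x ^ (k - j) * (1 - x) ^ j) (show r ≤ k+1 by omega)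
    rw [hsplit]
    exact sum_unit k x
  linarith [key, split]

lemma Qb_nonneg (r k : ℕ) (x : ℝ) (h0 : 0 ≤ x) (h1 : x ≤ 1) : 0 ≤ Qb r k x := by
  refine Finset.sum_nonneg (fun j hj => ?_)
  have : (0:ℝ) ≤ 1 - x := by linarith
  positivity

lemma Qb_le_one (r k : ℕ) (x : ℝ) (h0 : 0 ≤ x) (h1 : x ≤ 1) : Qb r k x ≤ 1 := by
  have h1x : (0:ℝ) ≤ 1 - x := by linarith
  rw [Qb, ← Finset.Ico_add_one_right_eq_Icc]
  by_cases hrk : r ≤ k + 1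
  · have hsplit := Finset.sum_range_add_sum_Ico
      (fun j => (k.choose j : ℝ) * x ^ (k - j) * (1 - x) ^ j) hrk
    have hpos : 0 ≤ ∑ i ∈ Finset.range r, (k.choose i : ℝ) * x ^ (k - i) * (1 - x) ^ i :=
      Finset.sum_nonneg (fun i hi => by positivity)
    have hu := sum_unit k x
    linarith [hsplit, hu, hpos]
  · rw [Finset.Ico_eq_empty (by omega)]
    simp

lemma Qb_self (r : ℕ) (x : ℝ) : Qb r r x = (1-x)^r := by
  rw [Qb, Finset.Icc_self, Finset.sum_singleton]
  simp

lemma choose_le_shift (n m : ℕ) : ∀ s : ℕ, n.choose m ≤ (n+s).choose (m+s) := by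
  intro s
  induction s with
  | zero => simp
  | succ s ih =>
    calc n.choose m ≤ (n+s).choose (m+s) := ih
    _ ≤ (n+s).choose (m+s) + (n+s).choose (m+s+1) := Nat.le_add_right _ _
    _ = (n+s+1).choose (m+s+1) := (Nat.choose_succ_succ _ _).symm

lemma Qb_ge (r k : ℕ) (hrk : r ≤ k) (x : ℝ) (h0 : 0 ≤ x) (h1 : x ≤ 1) :
    (1-x)^r ≤ Qb r k x := by
  have h1x : (0:ℝ) ≤ 1 - x := by linarith
  have expand : (1-x)^r = ∑ j ∈ Finset.Icc r k, ((k-r).choose (j-r) : ℝ) * x^(k-j) * (1-x)^j := by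
    have h : (1-x)^r = (1-x)^r * ∑ m ∈ Finset.range (k-r+1), (1-x)^m * x^(k-r-m) * ((k-r).choose m : ℝ) := by
      rw [← add_pow]
      norm_num
    rw [h, Finset.mul_sum]
    rw [← Finset.Ico_add_one_right_eq_Icc, Finset.sum_Ico_eq_sum_range]
    have hlen : k + 1 - r = (k - r) + 1 := by omega
    rw [hlen]
    refine Finset.sum_congr rfl (fun m hm => ?_)
    have hm' : m ≤ k - r := by have := Finset.mem_range.mp hm; omega
    have e1 : r + m - r = m := by omega
    have e2 : k - (r + m) = k - r - m := by omega
    rw [e1, e2]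
    ring
  rw [expand, Qb]
  refine Finset.sum_le_sum (fun j hj => ?_)
  have hj' := Finset.mem_Icc.mp hj
  have hc : ((k-r).choose (j-r) : ℝ) ≤ (k.choose j : ℝ) := by
    have := choose_le_shift (k-r) (j-r) r
    have e : k - r + r = k := by omega
    have e2 : j - r + r = j := by omega
    rw [e, e2] at this
    exact_mod_cast this
  have : (0:ℝ) ≤ x^(k-j) * (1-x)^j := by positivity
  nlinarith [this, hc]

lemma g_one (r k : ℕ) (hr : 1 ≤ r) : g r k 1 = 1 := by
  rw [g]
  rw [Finset.sum_eq_single 0]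
  · simp
  · intro i hi hne
    simp [zero_pow hne]
  · intro h
    exact absurd (Finset.mem_range.mpr (by omega)) h

lemma g_zero_self (r : ℕ) (hr : 1 ≤ r) : g r r 0 = r := by
  rw [g]
  rw [Finset.sum_eq_single (r-1)]
  · have : r - (r-1) - 1 = 0 := by omega
    rw [this]
    have hcc : r.choose (r-1) = r := by
      have h1 : r - (r-1) = 1 := by omega
      have := Nat.choose_symm (show r - 1 ≤ r by omega)
      rw [h1, Nat.choose_one_right] at this
      omega
    simp [hcc]
  · intro i hi hne
    have hik : i < r := Finset.mem_range.mp hi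
    have : r - i - 1 ≠ 0 := by omega
    simp [zero_pow this]
  · intro h
    exact absurd (Finset.mem_range.mpr (by omega)) h

lemma g_zero_gt (r k : ℕ) (hrk : r < k) : g r k 0 = 0 := by
  rw [g]
  refine Finset.sum_eq_zero (fun i hi => ?_)
  have hik : i < r := Finset.mem_range.mp hi
  have : k - i - 1 ≠ 0 := by omega
  simp [zero_pow this]



lemma negbin (x : ℝ) (n : ℕ) :
    ∀ M, n ≤ M →
    (1-x)^(n+1) * ∑ m ∈ Finset.Icc n M, (m.choose n : ℝ) * x^(m-n)
      = 1 - ∑ i ∈ Finset.range (n+1), ((M+1).choose i : ℝ) * (1-x)^i * x^(M+1-i) := by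
  refine Nat.le_induction ?_ ?_
  · -- base: M = n
    have hu := sum_unit (n+1) x
    rw [Finset.sum_range_succ] at hu
    simp only [Nat.choose_self, Nat.sub_self, Nat.cast_one, pow_zero, one_mul, mul_one] at hu
    have hcomm : ∑ i ∈ Finset.range (n+1), ((n+1).choose i : ℝ) * (1-x)^i * x^(n+1-i)
        = ∑ i ∈ Finset.range (n+1), ((n+1).choose i : ℝ) * x^(n+1-i) * (1-x)^i :=
      Finset.sum_congr rfl (fun i _ => by ring)
    rw [Finset.Icc_self, Finset.sum_singleton, Nat.choose_self, Nat.sub_self]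
    rw [hcomm]
    push_cast
    nlinarith [hu]
  · -- step
    intro M hnM ih
    rw [Finset.sum_Icc_succ_top (by omega : n ≤ M+1), mul_add, ih]
    have key : ∑ i ∈ Finset.range (n+1), ((M+2).choose i : ℝ) * (1-x)^i * x^(M+2-i)
        + (1-x)^(n+1) * ((M+1).choose n : ℝ) * x^(M+1-n)
        = ∑ i ∈ Finset.range (n+1), ((M+1).choose i : ℝ) * (1-x)^i * x^(M+1-i) := by
      have hA : ∑ i ∈ Finset.range (n+1), ((M+2).choose i : ℝ) * (1-x)^i * x^(M+2-i)
          = x * (∑ i ∈ Finset.range (n+1), ((M+1).choose i : ℝ) * (1-x)^i * x^(M+1-i))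
            + (1-x) * ∑ i ∈ Finset.range n, ((M+1).choose i : ℝ) * (1-x)^i * x^(M+1-i) := by
        rw [Finset.sum_range_succ' (fun i => ((M+2).choose i : ℝ) * (1-x)^i * x^(M+2-i)) n]
        rw [Finset.sum_range_succ' (fun i => ((M+1).choose i : ℝ) * (1-x)^i * x^(M+1-i)) n]
        rw [mul_add, Finset.mul_sum, Finset.mul_sum, add_assoc]
        rw [add_comm (x * (((M+1).choose 0 : ℝ) * (1-x)^0 * x^(M+1-0)))]
        rw [← add_assoc, ← Finset.sum_add_distrib]
        have hterm : ∀ i ∈ Finset.range n,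
            ((M+2).choose (i+1) : ℝ) * (1-x)^(i+1) * x^(M+2-(i+1))
            = x * (((M+1).choose (i+1) : ℝ) * (1-x)^(i+1) * x^(M+1-(i+1)))
              + (1-x) * (((M+1).choose i : ℝ) * (1-x)^i * x^(M+1-i)) := by
          intro i hi
          have hin : i < n := Finset.mem_range.mp hi
          have e1 : M+2-(i+1) = M+1-i := by omega
          have e2 : M+1-(i+1) = M-i := by omega
          have e3 : M+1-i = (M-i)+1 := by omega
          have hp : (M+2).choose (i+1) = (M+1).choose i + (M+1).choose (i+1) :=
            Nat.choose_succ_succ (M+1) i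
          rw [e1, e2, e3, hp]
          push_cast
          ring
        rw [Finset.sum_congr rfl hterm, Finset.sum_add_distrib]
        have hc : ((M+2).choose 0 : ℝ) * (1-x)^0 * x^(M+2-0)
            = x * (((M+1).choose 0 : ℝ) * (1-x)^0 * x^(M+1-0)) := by
          simp only [Nat.choose_zero_right, Nat.cast_one, pow_zero, one_mul, Nat.sub_zero]
          rw [← pow_succ']
        rw [hc]
      rw [hA, Finset.sum_range_succ]
      ring
    linarith [key]
section A4
open Finset

lemma choose_two_down_real (j k : ℕ) (h2 : 2 ≤ j) (hjk : j ≤ k) :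
    (1/((k:ℝ)*((k:ℝ)-1))) * (k.choose j : ℝ)
      = (1/((j:ℝ)*((j:ℝ)-1))) * (((k-2).choose (j-2) : ℕ) : ℝ) := by
  have h := choose_two_down j k h2 hjk
  obtain ⟨j', rfl⟩ : ∃ j', j = j' + 2 := ⟨j - 2, by omega⟩
  obtain ⟨k', rfl⟩ : ∃ k', k = k' + 2 := ⟨k - 2, by omega⟩
  have hs1 : k' + 2 - 1 = k' + 1 := by omega
  have hs2 : k' + 2 - 2 = k' := by omega
  have hs3 : j' + 2 - 1 = j' + 1 := by omega
  have hs4 : j' + 2 - 2 = j' := by omega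
  rw [hs1, hs2, hs3, hs4] at h
  have hr : ((k'+2) * (k'+1) * (k'.choose j') : ℝ) = ((j'+2) * (j'+1) * ((k'+2).choose (j'+2)) : ℝ) := by
    exact_mod_cast congrArg (Nat.cast : ℕ → ℝ) h
  push_cast at hr ⊢
  have hk0 : ((k':ℝ)+2) ≠ 0 := by positivity
  have hk1 : ((k':ℝ)+2-1) ≠ 0 := by
    have : ((k':ℝ)) ≥ 0 := Nat.cast_nonneg _
    intro hc; nlinarith
  have hj0 : ((j':ℝ)+2) ≠ 0 := by positivity
  have hj1 : ((j':ℝ)+2-1) ≠ 0 := by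
    have : ((j':ℝ)) ≥ 0 := Nat.cast_nonneg _
    intro hc; nlinarith
  field_simp
  linear_combination (-1 : ℝ) * hr

/-- the J-identity -/
lemma Jident (S : ℕ) (hS : 2 ≤ S) (x : ℝ) :
    (1-x) * ∑ i ∈ Finset.range (S-1),
        ((S-1).choose i : ℝ) * (1-x)^i * x^(S-1-i) * (1/((i:ℝ)+1) - 1/(S:ℝ))
      = (x - x^S)/S := by
  have hS0 : (S:ℝ) ≠ 0 := by positivity
  -- piece 1
  have hp1 : ∑ i ∈ Finset.range (S-1), ((S-1).choose i : ℝ) * (1-x)^(i+1) * x^(S-1-i) * ((S:ℝ)/((i:ℝ)+1))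
      = 1 - (1-x)^S - x^S := by
    have hterm : ∀ i ∈ Finset.range (S-1),
        ((S-1).choose i : ℝ) * (1-x)^(i+1) * x^(S-1-i) * ((S:ℝ)/((i:ℝ)+1))
          = (S.choose (i+1) : ℝ) * (1-x)^(i+1) * x^(S-(i+1)) := by
      intro i hi
      have hmem := Finset.mem_range.mp hi
      have hcd := choose_one_down S i (by omega)
      have hcdr : (S:ℝ) * ((S-1).choose i : ℝ) = ((i:ℝ)+1) * (S.choose (i+1) : ℝ) := by
        exact_mod_cast congrArg (Nat.cast : ℕ → ℝ) hcd
      have he : S - 1 - i = S - (i+1) := by omega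
      rw [he]
      have hi1 : ((i:ℝ)+1) ≠ 0 := by positivity
      field_simp
      linear_combination ((1-x)^(i+1) * x^(S-(i+1))) * hcdr
    rw [Finset.sum_congr rfl hterm]
    have hss : ∑ i ∈ Finset.range (S-1), (S.choose (i+1) : ℝ) * (1-x)^(i+1) * x^(S-(i+1))
        = (∑ l ∈ Finset.range S, (S.choose l : ℝ) * (1-x)^l * x^(S-l))
          - (S.choose 0 : ℝ) * (1-x)^0 * x^(S-0) := by
      have h1 := Finset.sum_range_succ' (fun l => (S.choose l : ℝ) * (1-x)^l * x^(S-l)) (S-1)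
      have he : S - 1 + 1 = S := by omega
      rw [he] at h1
      rw [h1]; ring
    rw [hss]
    have hfull : ∑ l ∈ Finset.range S, (S.choose l : ℝ) * (1-x)^l * x^(S-l)
        = 1 - (1-x)^S := by
      have h2 := Finset.sum_range_succ (fun l => (S.choose l : ℝ) * (1-x)^l * x^(S-l)) S
      have hu : ∑ l ∈ Finset.range (S+1), (S.choose l : ℝ) * (1-x)^l * x^(S-l) = 1 := by
        rw [show (∑ l ∈ Finset.range (S+1), (S.choose l : ℝ) * (1-x)^l * x^(S-l))
            = ∑ l ∈ Finset.range (S+1), (S.choose l : ℝ) * x^(S-l) * (1-x)^l from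
          Finset.sum_congr rfl (fun l _ => by ring)]
        exact sum_unit S x
      rw [hu] at h2
      simp only [Nat.choose_self, Nat.cast_one, Nat.sub_self, pow_zero, one_mul, mul_one] at h2
      linarith
    rw [hfull]
    simp
  -- piece 2
  have hp2 : ∑ i ∈ Finset.range (S-1), ((S-1).choose i : ℝ) * (1-x)^(i+1) * x^(S-1-i)
      = (1-x) - (1-x)^S := by
    have hsplit : ∑ i ∈ Finset.range (S-1), ((S-1).choose i : ℝ) * (1-x)^i * x^(S-1-i)
        = 1 - (1-x)^(S-1) := by
      have h2 := Finset.sum_range_succ (fun l => ((S-1).choose l : ℝ) * (1-x)^l * x^(S-1-l)) (S-1)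
      have he : S - 1 + 1 = S := by omega
      rw [he] at h2
      have hu : ∑ l ∈ Finset.range S, ((S-1).choose l : ℝ) * (1-x)^l * x^(S-1-l) = 1 := by
        have h3 := sum_unit (S-1) x
        rw [he] at h3
        rw [show (∑ l ∈ Finset.range S, ((S-1).choose l : ℝ) * (1-x)^l * x^(S-1-l))
            = ∑ l ∈ Finset.range S, ((S-1).choose l : ℝ) * x^(S-1-l) * (1-x)^l from
          Finset.sum_congr rfl (fun l _ => by ring)]
        exact h3
      rw [hu] at h2
      simp only [Nat.choose_self, Nat.cast_one, Nat.sub_self, pow_zero, one_mul, mul_one] at h2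
      linarith
    have : ∑ i ∈ Finset.range (S-1), ((S-1).choose i : ℝ) * (1-x)^(i+1) * x^(S-1-i)
        = (1-x) * ∑ i ∈ Finset.range (S-1), ((S-1).choose i : ℝ) * (1-x)^i * x^(S-1-i) := by
      rw [Finset.mul_sum]
      exact Finset.sum_congr rfl (fun i _ => by ring)
    rw [this, hsplit]
    have he : (1-x)^S = (1-x)^(S-1) * (1-x) := by
      rw [← pow_succ]
      congr 1
      omega
    rw [he]
    ring
  -- combine
  have key : (S:ℝ) * ((1-x) * ∑ i ∈ Finset.range (S-1),
      ((S-1).choose i : ℝ) * (1-x)^i * x^(S-1-i) * (1/((i:ℝ)+1) - 1/(S:ℝ)))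
      = x - x^S := by
    have hexp : (S:ℝ) * ((1-x) * ∑ i ∈ Finset.range (S-1),
        ((S-1).choose i : ℝ) * (1-x)^i * x^(S-1-i) * (1/((i:ℝ)+1) - 1/(S:ℝ)))
        = (∑ i ∈ Finset.range (S-1), ((S-1).choose i : ℝ) * (1-x)^(i+1) * x^(S-1-i) * ((S:ℝ)/((i:ℝ)+1)))
          - ∑ i ∈ Finset.range (S-1), ((S-1).choose i : ℝ) * (1-x)^(i+1) * x^(S-1-i) := by
      rw [Finset.mul_sum, Finset.mul_sum, ← Finset.sum_sub_distrib]
      refine Finset.sum_congr rfl (fun i hi => ?_)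
      have hi1 : ((i:ℝ)+1) ≠ 0 := by positivity
      field_simp
      ring
    rw [hexp, hp1, hp2]
    ring
  have := key
  field_simp at this ⊢
  linarith [this]

end A4
section A5
open Finset

lemma phi_eval (r S : ℕ) (hr : 2 ≤ r) (hrS : r ≤ S) (x : ℝ) :
    ∑ k ∈ Finset.Icc r S, (1/((k:ℝ)*((k:ℝ)-1))) * Qb r k x
    = ∑ j ∈ Finset.Icc r S, (1/((j:ℝ)*((j:ℝ)-1))) *
        ((1-x) * (1 - ∑ i ∈ Finset.range (j-1), ((S-1).choose i : ℝ) * (1-x)^i * x^(S-1-i))) := by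
  have h1 : ∑ k ∈ Finset.Icc r S, (1/((k:ℝ)*((k:ℝ)-1))) * Qb r k x
      = ∑ j ∈ Finset.Icc r S, ∑ k ∈ Finset.Icc j S,
          (1/((k:ℝ)*((k:ℝ)-1))) * ((k.choose j : ℝ) * x^(k-j) * (1-x)^j) := by
    simp only [Qb, Finset.mul_sum]
    refine Finset.sum_comm' ?_
    intro k j
    simp only [Finset.mem_Icc]
    omega
  rw [h1]
  refine Finset.sum_congr rfl (fun j hj => ?_)
  obtain ⟨hrj, hjS⟩ := Finset.mem_Icc.mp hj
  have h2 : ∑ k ∈ Finset.Icc j S, (1/((k:ℝ)*((k:ℝ)-1))) * ((k.choose j : ℝ) * x^(k-j) * (1-x)^j)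
      = ∑ m ∈ Finset.Icc (j-2) (S-2),
          (1/((j:ℝ)*((j:ℝ)-1))) * ((1-x)^j * ((m.choose (j-2) : ℝ) * x^(m-(j-2)))) := by
    refine Finset.sum_bij' (fun k _ => k - 2) (fun m _ => m + 2) ?_ ?_ ?_ ?_ ?_
    · intro k hk
      simp only [Finset.mem_Icc] at hk ⊢
      omega
    · intro m hm
      simp only [Finset.mem_Icc] at hm ⊢
      omega
    · intro k hk
      simp only [Finset.mem_Icc] at hk
      show k - 2 + 2 = k
      omega
    · intro m hm
      simp only [Finset.mem_Icc] at hm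
      show m + 2 - 2 = m
      omega
    · intro k hk
      simp only [Finset.mem_Icc] at hk
      have hc := choose_two_down_real j k (by omega) hk.1
      have he : k - 2 - (j-2) = k - j := by omega
      rw [he]
      linear_combination (x^(k-j) * (1-x)^j) * hc
  rw [h2, ← Finset.mul_sum]
  have hnb := negbin x (j-2) (S-2) (by omega)
  have e1 : j - 2 + 1 = j - 1 := by omega
  have e2 : S - 2 + 1 = S - 1 := by omega
  rw [e1, e2] at hnb
  -- hnb : (1-x)^(j-1) * ∑_{m ∈ Icc (j-2) (S-2)} C(m,j-2) x^(m-(j-2)) = 1 - B j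
  have hpow : (1-x)^j = (1-x) * (1-x)^(j-1) := by
    rw [← pow_succ']
    congr 1
    omega
  have hfac : (1-x)^j * (∑ m ∈ Finset.Icc (j-2) (S-2), ((m.choose (j-2) : ℝ) * x^(m-(j-2))))
      = (1-x) * (1 - ∑ i ∈ Finset.range (j-1), ((S-1).choose i : ℝ) * (1-x)^i * x^(S-1-i)) := by
    rw [hpow, mul_assoc, hnb]
  simp only [← Finset.mul_sum]
  rw [hfac]

lemma Ebound (r S : ℕ) (hr : 2 ≤ r) (hrS : r ≤ S) (x : ℝ) (hx0 : 0 ≤ x) (hx1 : x ≤ 1) :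
    (1-x) * ∑ j ∈ Finset.Icc r S, (1/((j:ℝ)*((j:ℝ)-1))) *
        (∑ i ∈ Finset.range (j-1), ((S-1).choose i : ℝ) * (1-x)^i * x^(S-1-i))
      ≤ (x - x^S)/S := by
  have h1x : (0:ℝ) ≤ 1 - x := by linarith
  have hswap : ∑ j ∈ Finset.Icc r S, (1/((j:ℝ)*((j:ℝ)-1))) *
        (∑ i ∈ Finset.range (j-1), ((S-1).choose i : ℝ) * (1-x)^i * x^(S-1-i))
      = ∑ i ∈ Finset.range (S-1), ∑ j ∈ Finset.Icc (max r (i+2)) S,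
          (1/((j:ℝ)*((j:ℝ)-1))) * (((S-1).choose i : ℝ) * (1-x)^i * x^(S-1-i)) := by
    simp only [Finset.mul_sum]
    refine Finset.sum_comm' ?_
    intro j i
    simp only [Finset.mem_Icc, Finset.mem_range]
    omega
  rw [hswap]
  have hbound : ∑ i ∈ Finset.range (S-1), ∑ j ∈ Finset.Icc (max r (i+2)) S,
          (1/((j:ℝ)*((j:ℝ)-1))) * (((S-1).choose i : ℝ) * (1-x)^i * x^(S-1-i))
      ≤ ∑ i ∈ Finset.range (S-1),
          ((S-1).choose i : ℝ) * (1-x)^i * x^(S-1-i) * (1/((i:ℝ)+1) - 1/(S:ℝ)) := by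
    refine Finset.sum_le_sum (fun i hi => ?_)
    have hiS : i < S - 1 := Finset.mem_range.mp hi
    rw [← Finset.sum_mul]
    have htel := telescope (max r (i+2)) (by omega) S (by omega)
    rw [htel]
    have hcoef : (0:ℝ) ≤ ((S-1).choose i : ℝ) * (1-x)^i * x^(S-1-i) := by positivity
    have hmono : 1/((max r (i+2) : ℕ):ℝ) * 0 ≤ 0 := by simp
    have hle : 1/(((max r (i+2) : ℕ):ℝ)-1) ≤ 1/((i:ℝ)+1) := by
      have h1 : ((i:ℝ)+1) > 0 := by positivity
      have h2 : ((i:ℝ)+1) ≤ ((max r (i+2) : ℕ):ℝ)-1 := by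
        have : (i+2 : ℕ) ≤ max r (i+2) := le_max_right _ _
        have hcast : ((i+2 : ℕ):ℝ) ≤ ((max r (i+2) : ℕ):ℝ) := by exact_mod_cast this
        push_cast at hcast ⊢
        linarith
      exact one_div_le_one_div_of_le h1 h2
    have : (1/(((max r (i+2) : ℕ):ℝ)-1) - 1/(S:ℝ)) ≤ (1/((i:ℝ)+1) - 1/(S:ℝ)) := by linarith
    calc (1/(((max r (i+2) : ℕ):ℝ)-1) - 1/(S:ℝ)) * (((S-1).choose i : ℝ) * (1-x)^i * x^(S-1-i))
        ≤ (1/((i:ℝ)+1) - 1/(S:ℝ)) * (((S-1).choose i : ℝ) * (1-x)^i * x^(S-1-i)) :=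
          mul_le_mul_of_nonneg_right this hcoef
      _ = ((S-1).choose i : ℝ) * (1-x)^i * x^(S-1-i) * (1/((i:ℝ)+1) - 1/(S:ℝ)) := by ring
  have hJ := Jident S (by omega) x
  calc (1-x) * ∑ i ∈ Finset.range (S-1), ∑ j ∈ Finset.Icc (max r (i+2)) S,
          (1/((j:ℝ)*((j:ℝ)-1))) * (((S-1).choose i : ℝ) * (1-x)^i * x^(S-1-i))
      ≤ (1-x) * ∑ i ∈ Finset.range (S-1),
          ((S-1).choose i : ℝ) * (1-x)^i * x^(S-1-i) * (1/((i:ℝ)+1) - 1/(S:ℝ)) :=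
        mul_le_mul_of_nonneg_left hbound h1x
    _ = (x - x^S)/S := hJ

lemma main_ineq (r S : ℕ) (hr : 2 ≤ r) (hrS : r ≤ S) (x : ℝ) (hx0 : 0 ≤ x) (hx1 : x ≤ 1) :
    (1-x) - (r:ℝ)*(((r:ℝ)-1)/S)*x
      ≤ (∑ k ∈ Finset.Icc r S, (((r:ℝ)-1)/((k:ℝ)*((k:ℝ)-1))) * Qb r k x)
        + (((r:ℝ)-1)/S) * (1-x)^r := by
  have hr1 : (1:ℝ) ≤ (r:ℝ)-1 := by
    have : (2:ℝ) ≤ (r:ℝ) := by exact_mod_cast hr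
    linarith
  have hS0 : (0:ℝ) < (S:ℝ) := by
    have : (0:ℕ) < S := by omega
    exact_mod_cast this
  have hfac : ∑ k ∈ Finset.Icc r S, (((r:ℝ)-1)/((k:ℝ)*((k:ℝ)-1))) * Qb r k x
      = ((r:ℝ)-1) * ∑ k ∈ Finset.Icc r S, (1/((k:ℝ)*((k:ℝ)-1))) * Qb r k x := by
    rw [Finset.mul_sum]
    exact Finset.sum_congr rfl (fun k _ => by ring)
  rw [hfac, phi_eval r S hr hrS x]
  have hsplit : ∑ j ∈ Finset.Icc r S, (1/((j:ℝ)*((j:ℝ)-1))) *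
        ((1-x) * (1 - ∑ i ∈ Finset.range (j-1), ((S-1).choose i : ℝ) * (1-x)^i * x^(S-1-i)))
      = (1-x) * ∑ j ∈ Finset.Icc r S, (1/((j:ℝ)*((j:ℝ)-1)))
        - (1-x) * ∑ j ∈ Finset.Icc r S, (1/((j:ℝ)*((j:ℝ)-1))) *
            (∑ i ∈ Finset.range (j-1), ((S-1).choose i : ℝ) * (1-x)^i * x^(S-1-i)) := by
    rw [Finset.mul_sum, Finset.mul_sum, ← Finset.sum_sub_distrib]
    exact Finset.sum_congr rfl (fun j _ => by ring)
  rw [hsplit]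
  have htel := telescope r hr S hrS
  rw [htel]
  have hE := Ebound r S hr hrS x hx0 hx1
  have hgap : (1-x) - (1-x)^r ≤ ((r:ℝ)-1)*x := by
    have := pow_gap (1-x) (by linarith) (by linarith) r (by omega)
    have hx : 1 - (1-x) = x := by ring
    rw [hx] at this
    exact this
  have hrne : ((r:ℝ)-1) ≠ 0 := by linarith
  have hSne : (S:ℝ) ≠ 0 := ne_of_gt hS0
  have hxS : (0:ℝ) ≤ x^S := by positivity
  set P := (1-x) * ∑ j ∈ Finset.Icc r S, (1/((j:ℝ)*((j:ℝ)-1))) *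
      (∑ i ∈ Finset.range (j-1), ((S-1).choose i : ℝ) * (1-x)^i * x^(S-1-i)) with hPdef
  have hP : ((r:ℝ)-1) * P ≤ ((r:ℝ)-1) * ((x - x^S)/(S:ℝ)) :=
    mul_le_mul_of_nonneg_left hE (by linarith)
  have step1 : ((r:ℝ)-1) * ((1-x)*(1/((r:ℝ)-1) - 1/(S:ℝ)) - P)
      = (1-x) - ((r:ℝ)-1)*(1-x)/(S:ℝ) - ((r:ℝ)-1)*P := by
    field_simp
  have hfin : 1 - x^S - (r:ℝ)*x ≤ (1-x)^r := by nlinarith [hgap, hxS]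
  have h0 : 0 ≤ (((r:ℝ)-1)/(S:ℝ)) * ((1-x)^r - (1 - x^S - (r:ℝ)*x)) := by
    have hw : (0:ℝ) ≤ ((r:ℝ)-1)/(S:ℝ) := by positivity
    exact mul_nonneg hw (by linarith)
  have hiden : ((1-x) - ((r:ℝ)-1)*(1-x)/(S:ℝ) - ((r:ℝ)-1)*((x-x^S)/(S:ℝ))
        + (((r:ℝ)-1)/(S:ℝ))*(1-x)^r) - ((1-x) - (r:ℝ)*(((r:ℝ)-1)/(S:ℝ))*x)
      = (((r:ℝ)-1)/(S:ℝ)) * ((1-x)^r - (1 - x^S - (r:ℝ)*x)) := by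
    field_simp
    ring
  have hmul2 : (1-x)*(1/((r:ℝ)-1) - 1/(S:ℝ)) - P
      = (1-x)*(1/((r:ℝ)-1) - 1/(S:ℝ)) - P := rfl
  linarith [hP, step1, h0, hiden]
end A5

end BP

open BP in
set_option maxHeartbeats 4000000 in
/-- For every `r ≥ 2` and every real `b ≥ (r-1)·log(4er)` there is an offspring
distribution `(p_k)_{k≥r}` with mean `b` whose critical probability
`p_c = 1 - 1/(max_{x∈[0,1]} G^r(x))` satisfies `p_c ≤ 2er(r-1)·e^{-b/(r-1)}`. -/
theorem exists_pmf_small_pc (r : ℕ) (hr : 2 ≤ r) (b : ℝ)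
    (hb : ((r : ℝ) - 1) * Real.log (4 * Real.exp 1 * (r : ℝ)) ≤ b) :
    ∃ p : ℕ → ℝ, (∀ k, k < r → p k = 0) ∧ (∀ k, 0 ≤ p k) ∧ (∑' k : ℕ, p k = 1) ∧
      (Summable fun k : ℕ => (k : ℝ) * p k) ∧ (∑' k : ℕ, (k : ℝ) * p k = b) ∧
      1 - 1 / sSup ((fun x => ∑' k : ℕ, p k * g r k x) '' Set.Icc (0 : ℝ) 1) ≤
        2 * Real.exp 1 * (r : ℝ) * ((r : ℝ) - 1) * Real.exp (-b / ((r : ℝ) - 1)) := by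
  have hrR : (2:ℝ) ≤ (r:ℝ) := by exact_mod_cast hr
  have hr1 : (1:ℝ) ≤ (r:ℝ) - 1 := by linarith
  have hr1pos : (0:ℝ) < (r:ℝ) - 1 := by linarith
  have hepos : (0:ℝ) < Real.exp 1 := Real.exp_pos 1
  obtain ⟨β, hβ⟩ : ∃ β : ℝ, β = b / ((r:ℝ)-1) := ⟨_, rfl⟩
  have hβlog : Real.log (4 * Real.exp 1 * (r:ℝ)) ≤ β := by
    rw [hβ, le_div_iff₀ hr1pos]
    linarith [hb]
  have h4er : (0:ℝ) < 4 * Real.exp 1 * (r:ℝ) := by positivity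
  have hexpβ : 4 * Real.exp 1 * (r:ℝ) ≤ Real.exp β := by
    calc 4 * Real.exp 1 * (r:ℝ) = Real.exp (Real.log (4 * Real.exp 1 * (r:ℝ))) :=
          (Real.exp_log h4er).symm
      _ ≤ Real.exp β := Real.exp_le_exp.mpr hβlog
  obtain ⟨z, hz⟩ : ∃ z : ℝ, z = Real.exp β / (2 * Real.exp 1) := ⟨_, rfl⟩
  have hz2r : 2*(r:ℝ) ≤ z := by
    rw [hz, le_div_iff₀ (by positivity : (0:ℝ) < 2 * Real.exp 1)]
    nlinarith [hexpβ]
  have hz0 : (0:ℝ) < z := by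
    rw [hz]
    positivity
  obtain ⟨S, hS⟩ : ∃ S : ℕ, S = ⌈z⌉₊ := ⟨_, rfl⟩
  have hzS : z ≤ (S:ℝ) := by rw [hS]; exact Nat.le_ceil z
  have hS2r : 2*r ≤ S := by
    have h1 : ((2*r : ℕ):ℝ) ≤ (S:ℝ) := by push_cast; linarith
    exact_mod_cast h1
  have hrS : r ≤ S := by omega
  have hS4 : 4 ≤ S := by omega
  have hSR : (4:ℝ) ≤ (S:ℝ) := by exact_mod_cast hS4
  have hS0 : (0:ℝ) < (S:ℝ) := by linarith
  have hSlt : (S:ℝ) < z + 1 := by rw [hS]; exact Nat.ceil_lt_add_one (le_of_lt hz0)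
  obtain ⟨w, hw⟩ : ∃ w : ℝ, w = ((r:ℝ)-1)/(S:ℝ) := ⟨_, rfl⟩
  have hw0 : 0 < w := by rw [hw]; positivity
  have h2rS : (2:ℝ)*(r:ℝ) ≤ (S:ℝ) := by
    have h1 : ((2*r : ℕ):ℝ) ≤ (S:ℝ) := by exact_mod_cast hS2r
    push_cast at h1
    linarith
  -- ε bound
  have heps : (r:ℝ)*w ≤ 2 * Real.exp 1 * (r:ℝ) * ((r:ℝ)-1) * Real.exp (-b/((r:ℝ)-1)) := by
    have hrr1 : (0:ℝ) ≤ (r:ℝ)*((r:ℝ)-1) := by nlinarith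
    have h1 : (r:ℝ)*w ≤ ((r:ℝ)*((r:ℝ)-1))/z := by
      rw [hw]
      have e : (r:ℝ)*(((r:ℝ)-1)/(S:ℝ)) = ((r:ℝ)*((r:ℝ)-1))/(S:ℝ) := by ring
      rw [e, div_le_div_iff₀ hS0 hz0]
      nlinarith [mul_le_mul_of_nonneg_left hzS hrr1]
    have hneg : -b/((r:ℝ)-1) = -β := by rw [hβ]; ring
    have h2 : ((r:ℝ)*((r:ℝ)-1))/z = 2 * Real.exp 1 * (r:ℝ) * ((r:ℝ)-1) * Real.exp (-b/((r:ℝ)-1)) := by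
      rw [hneg, Real.exp_neg, hz]
      have hβe : Real.exp β ≠ 0 := ne_of_gt (Real.exp_pos β)
      field_simp
    linarith [h1, h2]
  -- mean of base distribution
  obtain ⟨H, hH⟩ : ∃ H : ℝ, H = ∑ k ∈ Finset.Icc r S, (1:ℝ)/((k:ℝ)-1) := ⟨_, rfl⟩
  obtain ⟨m₀, hm₀⟩ : ∃ m : ℝ, m = ((r:ℝ)-1)*H + (r:ℝ)*w := ⟨_, rfl⟩
  have hm₀b : m₀ ≤ b := by
    have hHb : H ≤ 1/((r:ℝ)-1) + (Real.log ((S:ℝ)-1) - Real.log ((r:ℝ)-1)) := by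
      rw [hH]
      exact harmonic_shift r hr S hrS
    have hlogS : Real.log ((S:ℝ)-1) ≤ β - Real.log 2 - 1 := by
      have hS1z : (S:ℝ)-1 ≤ z := by linarith
      have hS1pos : (0:ℝ) < (S:ℝ)-1 := by linarith
      have hlog1 : Real.log ((S:ℝ)-1) ≤ Real.log z := Real.log_le_log hS1pos hS1z
      have hlogz : Real.log z = β - Real.log 2 - 1 := by
        rw [hz, Real.log_div (ne_of_gt (Real.exp_pos β)) (by positivity), Real.log_exp,
          Real.log_mul (by norm_num) (ne_of_gt hepos), Real.log_exp]
        ring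
      linarith
    have hlogr1 : 0 ≤ Real.log ((r:ℝ)-1) := Real.log_nonneg hr1
    have hlog2 : (0.6931:ℝ) ≤ Real.log 2 := by
      have := Real.log_two_gt_d9
      norm_num at this ⊢
      linarith
    have hrw : (r:ℝ)*w ≤ ((r:ℝ)-1)/2 := by
      rw [hw]
      have e : (r:ℝ)*(((r:ℝ)-1)/(S:ℝ)) = ((r:ℝ)*((r:ℝ)-1))/(S:ℝ) := by ring
      rw [e, div_le_div_iff₀ hS0 (by norm_num : (0:ℝ) < 2)]
      nlinarith [mul_le_mul_of_nonneg_left h2rS (by linarith : (0:ℝ) ≤ (r:ℝ)-1)]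
    have hβb : ((r:ℝ)-1)*β = b := by
      rw [hβ]
      field_simp
    have hHm : ((r:ℝ)-1)*H ≤ ((r:ℝ)-1)*(1/((r:ℝ)-1) + (Real.log ((S:ℝ)-1) - Real.log ((r:ℝ)-1))) :=
      mul_le_mul_of_nonneg_left hHb (by linarith)
    have hsimp : ((r:ℝ)-1)*(1/((r:ℝ)-1) + (Real.log ((S:ℝ)-1) - Real.log ((r:ℝ)-1)))
        = 1 + ((r:ℝ)-1)*Real.log ((S:ℝ)-1) - ((r:ℝ)-1)*Real.log ((r:ℝ)-1) := by
      have : ((r:ℝ)-1) ≠ 0 := ne_of_gt hr1pos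
      field_simp
      ring
    have hlogSm : ((r:ℝ)-1)*Real.log ((S:ℝ)-1) ≤ ((r:ℝ)-1)*(β - Real.log 2 - 1) :=
      mul_le_mul_of_nonneg_left hlogS (by linarith)
    have hexpm : ((r:ℝ)-1)*(β - Real.log 2 - 1) = b - ((r:ℝ)-1)*Real.log 2 - ((r:ℝ)-1) := by
      linear_combination hβb
    have hlogr1m : 0 ≤ ((r:ℝ)-1)*Real.log ((r:ℝ)-1) := mul_nonneg (by linarith) hlogr1
    have hlog2m : ((r:ℝ)-1)*(0.6931:ℝ) ≤ ((r:ℝ)-1)*Real.log 2 :=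
      mul_le_mul_of_nonneg_left hlog2 (by linarith)
    rw [hm₀]
    linarith [hHm, hsimp, hlogSm, hexpm, hlogr1m, hlog2m, hrw, hr1]
  obtain ⟨Δ, hΔ⟩ : ∃ d : ℝ, d = b - m₀ := ⟨_, rfl⟩
  have hΔ0 : 0 ≤ Δ := by rw [hΔ]; linarith
  obtain ⟨c, hc⟩ : ∃ c : ℕ, c = ⌈Δ * (S:ℝ) / ((r:ℝ)-1)⌉₊ := ⟨_, rfl⟩
  obtain ⟨V, hV⟩ : ∃ V : ℕ, V = S + 1 + c := ⟨_, rfl⟩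
  have hSV : S < V := by omega
  have hrV : r < V := by omega
  have hVrpos : (0:ℝ) < (V:ℝ) - (r:ℝ) := by
    have h1 : ((r:ℕ):ℝ) < ((V:ℕ):ℝ) := by exact_mod_cast hrV
    linarith
  obtain ⟨δ, hδ⟩ : ∃ d : ℝ, d = Δ / ((V:ℝ) - (r:ℝ)) := ⟨_, rfl⟩
  have hδ0 : 0 ≤ δ := by
    rw [hδ]
    exact div_nonneg hΔ0 (le_of_lt hVrpos)
  have hδV : δ * ((V:ℝ) - (r:ℝ)) = Δ := by
    rw [hδ]
    field_simp
  have hδw : δ ≤ w := by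
    rw [hδ, div_le_iff₀ hVrpos]
    have hceil : Δ * (S:ℝ) / ((r:ℝ)-1) ≤ (c : ℝ) := by
      rw [hc]
      exact Nat.le_ceil _
    have hVbig : Δ/w ≤ (V:ℝ) - (r:ℝ) := by
      have hΔw : Δ/w = Δ * (S:ℝ) / ((r:ℝ)-1) := by
        rw [hw, div_div_eq_mul_div]
      have hcast : ((V:ℕ):ℝ) = (S:ℝ) + 1 + (c:ℝ) := by
        rw [hV]; push_cast; ring
      rw [hΔw, hcast]
      have hrleS : (r:ℝ) ≤ (S:ℝ) := by exact_mod_cast hrS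
      linarith
    calc Δ = (Δ/w) * w := (div_mul_cancel₀ Δ (ne_of_gt hw0)).symm
      _ ≤ ((V:ℝ) - (r:ℝ)) * w := mul_le_mul_of_nonneg_right hVbig (le_of_lt hw0)
      _ = w * ((V:ℝ) - (r:ℝ)) := by ring
  -- the distribution
  obtain ⟨p, hp⟩ : ∃ p : ℕ → ℝ, p = fun k =>
      (if k ∈ Finset.Icc r S then ((r:ℝ)-1)/((k:ℝ)*((k:ℝ)-1)) else 0)
      + (if k = r then w - δ else 0) + (if k = V then δ else 0) := ⟨_, rfl⟩
  have hq_nonneg : ∀ k ∈ Finset.Icc r S, (0:ℝ) ≤ ((r:ℝ)-1)/((k:ℝ)*((k:ℝ)-1)) := by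
    intro k hk
    obtain ⟨hk1, hk2⟩ := Finset.mem_Icc.mp hk
    have hkR : (2:ℝ) ≤ (k:ℝ) := by
      have : 2 ≤ k := by omega
      exact_mod_cast this
    apply div_nonneg (by linarith)
    nlinarith
  have hsupp : ∀ k ∉ Finset.range (V+1), p k = 0 := by
    intro k hk
    have hkV : V < k := by
      simp only [Finset.mem_range] at hk
      omega
    simp only [hp]
    rw [if_neg (by simp only [Finset.mem_Icc]; omega), if_neg (by omega), if_neg (by omega)]
    norm_num
  -- the three finite-sum evaluations
  have hrmem : r ∈ Finset.range (V+1) := Finset.mem_range.mpr (by omega)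
  have hVmem : V ∈ Finset.range (V+1) := Finset.mem_range.mpr (by omega)
  have hIccsub : Finset.Icc r S ⊆ Finset.range (V+1) := by
    intro k hk
    simp only [Finset.mem_Icc] at hk
    exact Finset.mem_range.mpr (by omega)
  have hinter : Finset.range (V+1) ∩ Finset.Icc r S = Finset.Icc r S :=
    Finset.inter_eq_right.mpr hIccsub
  have hqsum : ∑ k ∈ Finset.Icc r S, ((r:ℝ)-1)/((k:ℝ)*((k:ℝ)-1)) = 1 - w := by
    have h1 : ∑ k ∈ Finset.Icc r S, ((r:ℝ)-1)/((k:ℝ)*((k:ℝ)-1))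
        = ((r:ℝ)-1) * ∑ k ∈ Finset.Icc r S, (1:ℝ)/((k:ℝ)*((k:ℝ)-1)) := by
      rw [Finset.mul_sum]
      exact Finset.sum_congr rfl (fun k _ => by ring)
    rw [h1, telescope r hr S hrS, hw]
    have : ((r:ℝ)-1) ≠ 0 := ne_of_gt hr1pos
    field_simp
  have htsum1 : ∑' (k:ℕ), p k = 1 := by
    rw [tsum_eq_sum hsupp]
    simp only [hp]
    rw [Finset.sum_add_distrib, Finset.sum_add_distrib]
    rw [Finset.sum_ite_mem, hinter, hqsum]
    rw [Finset.sum_ite_eq' (Finset.range (V+1)) r (fun _ => w - δ), if_pos hrmem]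
    rw [Finset.sum_ite_eq' (Finset.range (V+1)) V (fun _ => δ), if_pos hVmem]
    ring
  have hmean : ∑' (k:ℕ), (k:ℝ) * p k = b := by
    have hzero : ∀ k ∉ Finset.range (V+1), (k:ℝ) * p k = 0 := by
      intro k hk
      rw [hsupp k hk, mul_zero]
    rw [tsum_eq_sum hzero]
    have hsplit : ∀ k ∈ Finset.range (V+1), (k:ℝ) * p k
        = (if k ∈ Finset.Icc r S then ((r:ℝ)-1) * (1/((k:ℝ)-1)) else 0)
          + ((if k = r then (k:ℝ)*(w - δ) else 0) + (if k = V then (k:ℝ)*δ else 0)) := by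
      intro k hk
      simp only [hp]
      have e1 : (k:ℝ) * (if k ∈ Finset.Icc r S then ((r:ℝ)-1)/((k:ℝ)*((k:ℝ)-1)) else 0)
          = (if k ∈ Finset.Icc r S then ((r:ℝ)-1) * (1/((k:ℝ)-1)) else 0) := by
        split_ifs with hmem
        · obtain ⟨hk1, hk2⟩ := Finset.mem_Icc.mp hmem
          have hkR : (2:ℝ) ≤ (k:ℝ) := by
            have : 2 ≤ k := by omega
            exact_mod_cast this
          have hk0 : (k:ℝ) ≠ 0 := by linarith
          have hk1' : (k:ℝ)-1 ≠ 0 := by linarith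
          rw [← mul_div_assoc, mul_one_div, div_eq_div_iff (mul_ne_zero hk0 hk1') hk1']
          ring
        · ring
      have e2 : (k:ℝ) * (if k = r then w - δ else 0) = (if k = r then (k:ℝ)*(w - δ) else 0) := by
        split_ifs <;> ring
      have e3 : (k:ℝ) * (if k = V then δ else 0) = (if k = V then (k:ℝ)*δ else 0) := by
        split_ifs <;> ring
      calc (k:ℝ) * ((if k ∈ Finset.Icc r S then ((r:ℝ)-1)/((k:ℝ)*((k:ℝ)-1)) else 0)
            + (if k = r then w - δ else 0) + (if k = V then δ else 0))
          = (k:ℝ) * (if k ∈ Finset.Icc r S then ((r:ℝ)-1)/((k:ℝ)*((k:ℝ)-1)) else 0)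
            + (k:ℝ) * (if k = r then w - δ else 0) + (k:ℝ) * (if k = V then δ else 0) := by ring
        _ = _ := by rw [e1, e2, e3]; ring
    rw [Finset.sum_congr rfl hsplit]
    rw [Finset.sum_add_distrib, Finset.sum_add_distrib]
    rw [Finset.sum_ite_mem, hinter]
    rw [Finset.sum_ite_eq' (Finset.range (V+1)) r (fun k => (k:ℝ)*(w - δ)), if_pos hrmem]
    rw [Finset.sum_ite_eq' (Finset.range (V+1)) V (fun k => (k:ℝ)*δ), if_pos hVmem]
    rw [← Finset.mul_sum, ← hH]
    have : ((r:ℝ)-1)*H + ((r:ℝ)*(w-δ) + (V:ℝ)*δ) = m₀ + δ*((V:ℝ) - (r:ℝ)) := by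
      rw [hm₀]; ring
    rw [this, hδV, hΔ]
    ring
  -- evaluation of G
  have hGsum : ∀ x : ℝ, ∑' (k:ℕ), p k * g r k x
      = (∑ k ∈ Finset.Icc r S, ((r:ℝ)-1)/((k:ℝ)*((k:ℝ)-1)) * g r k x)
        + (w - δ) * g r r x + δ * g r V x := by
    intro x
    have hzero : ∀ k ∉ Finset.range (V+1), p k * g r k x = 0 := by
      intro k hk
      rw [hsupp k hk, zero_mul]
    rw [tsum_eq_sum hzero]
    have hsplit : ∀ k ∈ Finset.range (V+1), p k * g r k x
        = (if k ∈ Finset.Icc r S then ((r:ℝ)-1)/((k:ℝ)*((k:ℝ)-1)) * g r k x else 0)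
          + ((if k = r then (w - δ) * g r k x else 0) + (if k = V then δ * g r k x else 0)) := by
      intro k hk
      simp only [hp]
      have e1 : (if k ∈ Finset.Icc r S then ((r:ℝ)-1)/((k:ℝ)*((k:ℝ)-1)) else 0) * g r k x
          = (if k ∈ Finset.Icc r S then ((r:ℝ)-1)/((k:ℝ)*((k:ℝ)-1)) * g r k x else 0) := by
        split_ifs <;> ring
      have e2 : (if k = r then w - δ else 0) * g r k x
          = (if k = r then (w - δ) * g r k x else 0) := by
        split_ifs <;> ring
      have e3 : (if k = V then δ else 0) * g r k x
          = (if k = V then δ * g r k x else 0) := by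
        split_ifs <;> ring
      calc ((if k ∈ Finset.Icc r S then ((r:ℝ)-1)/((k:ℝ)*((k:ℝ)-1)) else 0)
            + (if k = r then w - δ else 0) + (if k = V then δ else 0)) * g r k x
          = (if k ∈ Finset.Icc r S then ((r:ℝ)-1)/((k:ℝ)*((k:ℝ)-1)) else 0) * g r k x
            + (if k = r then w - δ else 0) * g r k x
            + (if k = V then δ else 0) * g r k x := by ring
        _ = _ := by rw [e1, e2, e3]; ring
    rw [Finset.sum_congr rfl hsplit]
    rw [Finset.sum_add_distrib, Finset.sum_add_distrib]
    rw [Finset.sum_ite_mem, hinter]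
    rw [Finset.sum_ite_eq' (Finset.range (V+1)) r (fun k => (w - δ) * g r k x), if_pos hrmem]
    rw [Finset.sum_ite_eq' (Finset.range (V+1)) V (fun k => δ * g r k x), if_pos hVmem]
    ring
  -- the uniform bound on G
  have hGle : ∀ x ∈ Set.Icc (0:ℝ) 1, ∑' (k:ℕ), p k * g r k x ≤ 1 + (r:ℝ)*w := by
    rintro x ⟨hx0, hx1⟩
    rw [hGsum x]
    rcases eq_or_lt_of_le hx0 with h0 | hxpos
    · -- x = 0
      have h0' : x = 0 := h0.symm
      subst h0'
      have hΦ0 : ∑ k ∈ Finset.Icc r S, ((r:ℝ)-1)/((k:ℝ)*((k:ℝ)-1)) * g r k 0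
          = ((r:ℝ)-1)/((r:ℝ)*((r:ℝ)-1)) * g r r 0 := by
        refine Finset.sum_eq_single r ?_ ?_
        · intro k hk hne
          have hk1 := (Finset.mem_Icc.mp hk).1
          rw [g_zero_gt r k (by omega), mul_zero]
        · intro h
          exact absurd (Finset.mem_Icc.mpr ⟨le_refl r, hrS⟩) h
      rw [hΦ0, g_zero_self r (by omega), g_zero_gt r V hrV]
      have hr0 : (r:ℝ) ≠ 0 := by linarith
      have hr1ne : (r:ℝ)-1 ≠ 0 := ne_of_gt hr1pos
      have h1 : ((r:ℝ)-1)/((r:ℝ)*((r:ℝ)-1)) * (r:ℝ) = 1 := by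
        field_simp
      rw [h1]
      nlinarith [hδ0, hrR]
    · -- 0 < x
      have hkey : x * ((∑ k ∈ Finset.Icc r S, ((r:ℝ)-1)/((k:ℝ)*((k:ℝ)-1)) * g r k x)
            + (w - δ) * g r r x + δ * g r V x) ≤ x * (1 + (r:ℝ)*w) := by
        have hxΦ : x * ∑ k ∈ Finset.Icc r S, ((r:ℝ)-1)/((k:ℝ)*((k:ℝ)-1)) * g r k x
            = (1 - w) - ∑ k ∈ Finset.Icc r S, ((r:ℝ)-1)/((k:ℝ)*((k:ℝ)-1)) * Qb r k x := by
          rw [Finset.mul_sum]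
          have hterm : ∀ k ∈ Finset.Icc r S,
              x * (((r:ℝ)-1)/((k:ℝ)*((k:ℝ)-1)) * g r k x)
              = ((r:ℝ)-1)/((k:ℝ)*((k:ℝ)-1)) - ((r:ℝ)-1)/((k:ℝ)*((k:ℝ)-1)) * Qb r k x := by
            intro k hk
            have hk1 := (Finset.mem_Icc.mp hk).1
            have hxg := xg_eq r k (by omega) hk1 x
            linear_combination (((r:ℝ)-1)/((k:ℝ)*((k:ℝ)-1))) * hxg
          rw [Finset.sum_congr rfl hterm, Finset.sum_sub_distrib, hqsum]
        have hr_eq : x * ((w - δ) * g r r x) = w - δ - w*(1-x)^r + δ*(1-x)^r := by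
          have hxg := xg_eq r r (by omega) (le_refl r) x
          rw [Qb_self] at hxg
          linear_combination (w - δ) * hxg
        have hV_le : x * (δ * g r V x) ≤ δ - δ*(1-x)^r := by
          have hxg := xg_eq r V (by omega) (by omega) x
          have hge := Qb_ge r V (by omega) x hx0 hx1
          nlinarith [mul_le_mul_of_nonneg_left hge hδ0]
        have hmain := main_ineq r S hr hrS x hx0 hx1
        rw [← hw] at hmain
        have hdist : x * ((∑ k ∈ Finset.Icc r S, ((r:ℝ)-1)/((k:ℝ)*((k:ℝ)-1)) * g r k x)
              + (w - δ) * g r r x + δ * g r V x)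
            = x * (∑ k ∈ Finset.Icc r S, ((r:ℝ)-1)/((k:ℝ)*((k:ℝ)-1)) * g r k x)
              + x * ((w - δ) * g r r x) + x * (δ * g r V x) := by ring
        rw [hdist, hxΦ, hr_eq]
        nlinarith [hV_le, hmain]
      exact le_of_mul_le_mul_left hkey hxpos
  -- the sSup bound
  have h1mem : (1:ℝ) ∈ (fun x => ∑' (k:ℕ), p k * g r k x) '' Set.Icc (0:ℝ) 1 := by
    refine ⟨1, ⟨by norm_num, le_refl 1⟩, ?_⟩
    show (∑' (k:ℕ), p k * g r k 1) = 1
    have hfun : (fun k : ℕ => p k * g r k 1) = p := by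
      funext k
      rw [g_one r k (by omega)]
      ring
    rw [hfun]
    exact htsum1
  have hubset : ∀ y ∈ (fun x => ∑' (k:ℕ), p k * g r k x) '' Set.Icc (0:ℝ) 1,
      y ≤ 1 + (r:ℝ)*w := by
    rintro y ⟨x, hx, rfl⟩
    exact hGle x hx
  have hbdd : BddAbove ((fun x => ∑' (k:ℕ), p k * g r k x) '' Set.Icc (0:ℝ) 1) :=
    ⟨1 + (r:ℝ)*w, hubset⟩
  have hub : sSup ((fun x => ∑' (k:ℕ), p k * g r k x) '' Set.Icc (0:ℝ) 1) ≤ 1 + (r:ℝ)*w :=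
    csSup_le ⟨1, h1mem⟩ hubset
  have hlb : (1:ℝ) ≤ sSup ((fun x => ∑' (k:ℕ), p k * g r k x) '' Set.Icc (0:ℝ) 1) :=
    le_csSup hbdd h1mem
  have hM0 : (0:ℝ) < sSup ((fun x => ∑' (k:ℕ), p k * g r k x) '' Set.Icc (0:ℝ) 1) := by
    linarith
  have hrw0 : (0:ℝ) ≤ (r:ℝ)*w := by nlinarith [hw0, hrR]
  have hfrac : 1 - 1 / sSup ((fun x => ∑' (k:ℕ), p k * g r k x) '' Set.Icc (0:ℝ) 1)
      ≤ (r:ℝ)*w := by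
    have hi1 : 1/(1 + (r:ℝ)*w)
        ≤ 1/(sSup ((fun x => ∑' (k:ℕ), p k * g r k x) '' Set.Icc (0:ℝ) 1)) := by
      exact one_div_le_one_div_of_le hM0 hub
    have hpos : (0:ℝ) < 1 + (r:ℝ)*w := by linarith
    have hi2 : 1 - (r:ℝ)*w ≤ 1/(1+(r:ℝ)*w) := by
      rw [le_div_iff₀ hpos]
      nlinarith [sq_nonneg ((r:ℝ)*w)]
    linarith
  refine ⟨p, ?_, ?_, htsum1, ?_, hmean, ?_⟩
  · -- zero below r
    intro k hk
    simp only [hp]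
    rw [if_neg (by simp only [Finset.mem_Icc]; omega), if_neg (by omega), if_neg (by omega)]
    norm_num
  · -- nonneg
    intro k
    simp only [hp]
    refine add_nonneg (add_nonneg ?_ ?_) ?_
    · split_ifs with h
      · exact hq_nonneg k h
      · exact le_refl 0
    · split_ifs with h
      · linarith
      · exact le_refl 0
    · split_ifs with h
      · exact hδ0
      · exact le_refl 0
  · -- summable
    refine summable_of_ne_finset_zero (s := Finset.range (V+1)) ?_
    intro k hk
    rw [hsupp k hk, mul_zero]
  · -- final
    linarith [hfrac, heps]
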